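/- Let ψ_n : ℂ → ℂ and φ̄_n : ℂ → ℂ (n ∈ ℤ) be differentiable functions satisfying, for all n ≥ 0 and all points of ℂ: ψ_n′(x) = −γ(n−1)·ψ_{n−1}(x) − Σ_{j=0}^{d1} β_j(n+j)·ψ_{n+j}(x) and φ̄_n′(x′) = Σ_{j=−1}^{d1} β_j(n)·φ̄_{n−j}(x′). Then for every N ≥ 1 and all x, x′ ∈ ℂ: Σ_{n=0}^{N−1} [ψ_n′(x)·φ̄_n(x′) + ψ_n(x)·φ̄_n′(x′)] = γ(N−1)·φ̄_N(x′)·ψ_{N−1}(x) − Σ_{j=1}^{d1} Σ_{k=0}^{j−1} β_j(N+k)·φ̄_{N+k−j}(x′)·ψ_{N+k}(x). (Differential generalized Christoffel–Darboux relation for the kernel K_{11}.) -/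
import Mathlib


open BigOperators

/-- Shift of summation index by one on an integer interval `Icc 0 (j-1)`. -/
lemma sum_shift_aux (f : ℤ → ℂ) (j : ℤ) (hj : 1 ≤ j) :
    ∑ k ∈ Finset.Icc (0 : ℤ) (j - 1), f (1 + k) =
      ∑ k ∈ Finset.Icc (0 : ℤ) (j - 1), f k + f j - f 0 := by
  have h1 : ∑ k ∈ Finset.Icc (0 : ℤ) (j - 1), f (1 + k) =
      ∑ k ∈ Finset.Icc (1 : ℤ) j, f k := by
    rw [show Finset.Icc (1 : ℤ) j = Finset.map (addLeftEmbedding 1) (Finset.Icc 0 (j - 1)) by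
      rw [Finset.map_add_left_Icc]
      ext m; simp only [Finset.mem_Icc]; omega]
    rw [Finset.sum_map]
    rfl
  have h2 : Finset.Icc (0 : ℤ) j = insert 0 (Finset.Icc (1 : ℤ) j) := by
    ext m; simp only [Finset.mem_Icc, Finset.mem_insert]; omega
  have h3 : Finset.Icc (0 : ℤ) j = insert j (Finset.Icc (0 : ℤ) (j - 1)) := by
    ext m; simp only [Finset.mem_Icc, Finset.mem_insert]; omega
  have h4 : ∑ k ∈ Finset.Icc (0 : ℤ) j, f k = f 0 + ∑ k ∈ Finset.Icc (1 : ℤ) j, f k := by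
    rw [h2, Finset.sum_insert (by intro h; simp only [Finset.mem_Icc] at h; omega)]
  have h5 : ∑ k ∈ Finset.Icc (0 : ℤ) j, f k = f j + ∑ k ∈ Finset.Icc (0 : ℤ) (j - 1), f k := by
    rw [h3, Finset.sum_insert (by intro h; simp only [Finset.mem_Icc] at h; omega)]
  rw [h1]; linear_combination h5 - h4

/-- Differential generalized Christoffel–Darboux relation for the kernel `K₁₁`. -/
theorem christoffel_darboux_diff_K11
    (d1 d2 : ℕ) (hd1 : 1 ≤ d1) (hd2 : 1 ≤ d2)
    (α β : ℤ → ℤ → ℂ) (γ : ℤ → ℂ)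
    (hαsupp : ∀ j n : ℤ, (j < -1 ∨ (d2 : ℤ) < j) → α j n = 0)
    (hβsupp : ∀ j n : ℤ, (j < -1 ∨ (d1 : ℤ) < j) → β j n = 0)
    (hαγ : ∀ n : ℤ, α (-1) n = γ n)
    (hβγ : ∀ n : ℤ, β (-1) n = γ n)
    (hαsemi : ∀ j n : ℤ, n < j → α j n = 0)
    (hβsemi : ∀ j n : ℤ, n < j → β j n = 0)
    (hαneg : ∀ j n : ℤ, n < 0 → α j n = 0)
    (hβneg : ∀ j n : ℤ, n < 0 → β j n = 0)
    (hγneg : ∀ n : ℤ, n < 0 → γ n = 0)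
    (ψ φb : ℤ → ℂ → ℂ)
    (hψdiff : ∀ n : ℤ, Differentiable ℂ (ψ n))
    (hφbdiff : ∀ n : ℤ, Differentiable ℂ (φb n))
    (hψ : ∀ n : ℤ, 0 ≤ n → ∀ x : ℂ,
      deriv (ψ n) x = -(γ (n - 1) * ψ (n - 1) x) -
        ∑ j ∈ Finset.Icc (0 : ℤ) (d1 : ℤ), β j (n + j) * ψ (n + j) x)
    (hφb : ∀ n : ℤ, 0 ≤ n → ∀ x' : ℂ,
      deriv (φb n) x' = ∑ j ∈ Finset.Icc (-1 : ℤ) (d1 : ℤ), β j n * φb (n - j) x')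
    (N : ℤ) (hN : 1 ≤ N) (x x' : ℂ) :
    ∑ n ∈ Finset.Icc (0 : ℤ) (N - 1),
        (deriv (ψ n) x * φb n x' + ψ n x * deriv (φb n) x') =
      γ (N - 1) * φb N x' * ψ (N - 1) x -
        ∑ j ∈ Finset.Icc (1 : ℤ) (d1 : ℤ), ∑ k ∈ Finset.Icc (0 : ℤ) (j - 1),
          β j (N + k) * φb (N + k - j) x' * ψ (N + k) x := by
  -- abbreviations
  set G : ℤ → ℤ → ℂ := fun j m => β j m * φb (m - j) x' * ψ m x with hG
  set A : ℤ → ℂ := fun n => γ (n - 1) * φb n x' * ψ (n - 1) x with hA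
  -- the key per-term expansion
  have hIcc : Finset.Icc (-1 : ℤ) (d1 : ℤ) = insert (-1) (Finset.Icc 0 (d1 : ℤ)) := by
    ext m; simp only [Finset.mem_Icc, Finset.mem_insert]; omega
  have hterm : ∀ n : ℤ, 0 ≤ n →
      deriv (ψ n) x * φb n x' + ψ n x * deriv (φb n) x' =
        A (n + 1) - A n + ∑ j ∈ Finset.Icc (0 : ℤ) (d1 : ℤ), (G j n - G j (n + j)) := by
    intro n hn
    rw [hψ n hn x, hφb n hn x', hIcc,
      Finset.sum_insert (by intro h; simp only [Finset.mem_Icc] at h; omega)]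
    rw [hβγ]
    have e1 : ∑ j ∈ Finset.Icc (0 : ℤ) (d1 : ℤ), (G j n - G j (n + j)) =
        (∑ j ∈ Finset.Icc (0 : ℤ) (d1 : ℤ), β j n * φb (n - j) x') * ψ n x -
        (∑ j ∈ Finset.Icc (0 : ℤ) (d1 : ℤ), β j (n + j) * ψ (n + j) x) * φb n x' := by
      have e1a : ∑ j ∈ Finset.Icc (0 : ℤ) (d1 : ℤ), G j n =
          (∑ j ∈ Finset.Icc (0 : ℤ) (d1 : ℤ), β j n * φb (n - j) x') * ψ n x := by
        rw [Finset.sum_mul]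
      have e1b : ∑ j ∈ Finset.Icc (0 : ℤ) (d1 : ℤ), G j (n + j) =
          (∑ j ∈ Finset.Icc (0 : ℤ) (d1 : ℤ), β j (n + j) * ψ (n + j) x) * φb n x' := by
        rw [Finset.sum_mul]
        refine Finset.sum_congr rfl fun j _ => ?_
        have hjj : n + j - j = n := by ring
        simp only [hG, hjj]
        ring
      rw [Finset.sum_sub_distrib, e1a, e1b]
    rw [e1]
    simp only [hA]
    rw [show n + 1 - 1 = n by ring, show n - -1 = n + 1 by ring]
    ring
  -- shifted double-sum identity
  have hshift : ∀ M : ℤ,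
      ∑ j ∈ Finset.Icc (1 : ℤ) (d1 : ℤ), ∑ k ∈ Finset.Icc (0 : ℤ) (j - 1), G j (M + 1 + k) =
        ∑ j ∈ Finset.Icc (1 : ℤ) (d1 : ℤ), ∑ k ∈ Finset.Icc (0 : ℤ) (j - 1), G j (M + k)
          + ∑ j ∈ Finset.Icc (1 : ℤ) (d1 : ℤ), (G j (M + j) - G j M) := by
    intro M
    rw [← Finset.sum_add_distrib]
    refine Finset.sum_congr rfl fun j hj => ?_
    have hj1 : 1 ≤ j := (Finset.mem_Icc.mp hj).1
    have key := sum_shift_aux (fun m => G j (M + m)) j hj1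
    simp only [add_zero] at key
    calc ∑ k ∈ Finset.Icc (0 : ℤ) (j - 1), G j (M + 1 + k)
        = ∑ k ∈ Finset.Icc (0 : ℤ) (j - 1), (fun m => G j (M + m)) (1 + k) := by
          refine Finset.sum_congr rfl fun k _ => ?_
          simp only []
          rw [show M + 1 + k = M + (1 + k) by ring]
      _ = _ := by rw [key]; ring
  -- restriction of the Icc 0 d1 sum to Icc 1 d1
  have hsplit : ∀ n : ℤ, ∑ j ∈ Finset.Icc (0 : ℤ) (d1 : ℤ), (G j n - G j (n + j)) =
      ∑ j ∈ Finset.Icc (1 : ℤ) (d1 : ℤ), (G j n - G j (n + j)) := by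
    intro n
    have h0 : Finset.Icc (0 : ℤ) (d1 : ℤ) = insert 0 (Finset.Icc (1 : ℤ) (d1 : ℤ)) := by
      ext m; simp only [Finset.mem_Icc, Finset.mem_insert]; omega
    rw [h0, Finset.sum_insert (by intro h; simp only [Finset.mem_Icc] at h; omega)]
    simp
  -- main induction
  suffices H : ∀ N : ℤ, 1 ≤ N →
      ∑ n ∈ Finset.Icc (0 : ℤ) (N - 1),
          (deriv (ψ n) x * φb n x' + ψ n x * deriv (φb n) x') =
        A N - ∑ j ∈ Finset.Icc (1 : ℤ) (d1 : ℤ), ∑ k ∈ Finset.Icc (0 : ℤ) (j - 1),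
            G j (N + k) by
    have := H N hN
    simp only [hA, hG] at this
    rw [this]
  refine Int.le_induction ?_ ?_
  · -- N = 1
    have hA0 : A 0 = 0 := by
      simp only [hA]
      rw [hγneg (0 - 1) (by norm_num)]
      ring
    have hbase_inner : ∀ j ∈ Finset.Icc (1 : ℤ) (d1 : ℤ),
        ∑ k ∈ Finset.Icc (0 : ℤ) (j - 1), G j (1 + k) = G j j := by
      intro j hj
      have hj1 : 1 ≤ j := (Finset.mem_Icc.mp hj).1
      rw [Finset.sum_eq_single_of_mem (j - 1) (Finset.mem_Icc.mpr ⟨by omega, le_rfl⟩)]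
      · rw [show 1 + (j - 1) = j by ring]
      · intro k hk hkne
        have hk' := Finset.mem_Icc.mp hk
        simp only [hG]
        rw [hβsemi j (1 + k) (by omega)]
        ring
    have hneg : ∑ j ∈ Finset.Icc (1 : ℤ) (d1 : ℤ), (G j 0 - G j (0 + j)) =
        -∑ j ∈ Finset.Icc (1 : ℤ) (d1 : ℤ), G j j := by
      rw [← Finset.sum_neg_distrib]
      refine Finset.sum_congr rfl fun j hj => ?_
      have hj1 : 1 ≤ j := (Finset.mem_Icc.mp hj).1
      have hG0 : G j 0 = 0 := by
        simp only [hG]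
        rw [hβsemi j 0 (by omega)]
        ring
      rw [hG0, zero_add]
      ring
    rw [show (1 : ℤ) - 1 = 0 by ring, Finset.Icc_self, Finset.sum_singleton]
    rw [hterm 0 le_rfl, hsplit 0, hA0, hneg]
    rw [Finset.sum_congr rfl hbase_inner]
    rw [zero_add]
    ring
  · -- inductive step
    intro N hN ih
    have hins : Finset.Icc (0 : ℤ) (N + 1 - 1) = insert N (Finset.Icc (0 : ℤ) (N - 1)) := by
      ext m; simp only [Finset.mem_Icc, Finset.mem_insert]; omega
    rw [hins, Finset.sum_insert (by intro h; simp only [Finset.mem_Icc] at h; omega), ih,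
      hterm N (by omega), hsplit N]
    rw [show A (N + 1) - A N + ∑ j ∈ Finset.Icc (1 : ℤ) (d1 : ℤ), (G j N - G j (N + j)) +
        (A N - ∑ j ∈ Finset.Icc (1 : ℤ) (d1 : ℤ), ∑ k ∈ Finset.Icc (0 : ℤ) (j - 1), G j (N + k)) =
        A (N + 1) - (∑ j ∈ Finset.Icc (1 : ℤ) (d1 : ℤ), ∑ k ∈ Finset.Icc (0 : ℤ) (j - 1), G j (N + k)
          + ∑ j ∈ Finset.Icc (1 : ℤ) (d1 : ℤ), (G j (N + j) - G j N)) by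
      rw [Finset.sum_sub_distrib, Finset.sum_sub_distrib]; ring]
    rw [← hshift N]
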